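/- For T = {6,2}: b(n) := n(n+4)(2n+1)²/(15(7n-4)) satisfies b(n) = (1372n³ + 7644n² + 10199n + 7200)/(2401·15) + 1920/(2401(7n-4)), and for every integer n ≥ 8817, b(n) is not an integer. -/

import Mathlib

noncomputable def bn62 (n : ℕ) : ℝ :=
  (n : ℝ) * ((n : ℝ) + 4) * (2 * (n : ℝ) + 1) ^ 2 / (15 * (7 * (n : ℝ) - 4))

lemma bn62_ne (n : ℕ) : 7 * (n : ℝ) - 4 ≠ 0 := by
  rcases Nat.eq_zero_or_pos n with h | h
  · subst h; norm_num
  · have : (1 : ℝ) ≤ (n : ℝ) := by exact_mod_cast h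
    nlinarith

lemma bn62_decomp (n : ℕ) : bn62 n =
    (1372 * (n : ℝ) ^ 3 + 7644 * (n : ℝ) ^ 2 + 10199 * (n : ℝ) + 7200) / (2401 * 15)
      + 1920 / (2401 * (7 * (n : ℝ) - 4)) := by
  have hne := bn62_ne n
  unfold bn62
  rw [div_add_div _ _ (by norm_num) (mul_ne_zero (by norm_num) hne),
    div_eq_div_iff (mul_ne_zero (by norm_num) hne)
      (mul_ne_zero (by norm_num) (mul_ne_zero (by norm_num) hne))]
  ring

/-- The decomposition of `b_{n,{6,2}}` and its non-integrality for `n ≥ 8817`. -/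
theorem bn62_props :
    (∀ n : ℕ, bn62 n =
        (1372 * (n : ℝ) ^ 3 + 7644 * (n : ℝ) ^ 2 + 10199 * (n : ℝ) + 7200) / (2401 * 15)
          + 1920 / (2401 * (7 * (n : ℝ) - 4)))
      ∧ ∀ n : ℕ, 8817 ≤ n → ¬∃ m : ℤ, bn62 n = m := by
  refine ⟨bn62_decomp, ?_⟩
  rintro n hn ⟨m, hm⟩
  have hne := bn62_ne n
  have hd := bn62_decomp n
  rw [hm] at hd
  have hnR : (8817 : ℝ) ≤ (n : ℝ) := by exact_mod_cast hn
  have hpos : (0 : ℝ) < 7 * (n : ℝ) - 4 := by linarith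
  set z : ℤ := 2401 * 15 * m - (1372 * (n : ℤ) ^ 3 + 7644 * (n : ℤ) ^ 2 + 10199 * n + 7200)
    with hz
  have hzR : (z : ℝ) = 28800 / (7 * (n : ℝ) - 4) := by
    have h1 : (m : ℝ) * (2401 * 15) * (7 * (n : ℝ) - 4)
        = ((1372 * (n : ℝ) ^ 3 + 7644 * (n : ℝ) ^ 2 + 10199 * (n : ℝ) + 7200)
          * (7 * (n : ℝ) - 4) + 15 * 1920) := by
      have key : 1920 / (2401 * (7 * (n : ℝ) - 4)) * (2401 * (7 * (n : ℝ) - 4)) = 1920 :=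
        div_mul_cancel₀ _ (mul_ne_zero (by norm_num) hne)
      linear_combination (2401 * 15 * (7 * (n : ℝ) - 4)) * hd + 15 * key
    push_cast [hz]
    rw [eq_div_iff hne]
    linear_combination h1
  have h0 : (0 : ℝ) < (z : ℝ) := by
    rw [hzR]; positivity
  have h1 : (z : ℝ) < 1 := by
    rw [hzR, div_lt_one hpos]; linarith
  have hz0 : (0 : ℤ) < z := by exact_mod_cast h0
  have : (1 : ℝ) ≤ (z : ℝ) := by exact_mod_cast hz0
  linarith
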